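/- Suppose \(\kappa \in \Gamma_k\) with \(\kappa_1 \ge \cdots \ge \kappa_n\) and \(\kappa_n \le -\theta \kappa_1\) for some \(\theta \in (0,1]\) with \(\kappa_1 > 0\). Let \(F^{ii} = \sigma_{k-1}(\kappa|i)\). Then \(\sum_{i=1}^n F^{ii} \kappa_i^2 \ge F^{nn} \kappa_n^2 \ge \frac{\theta^2}{n} \kappa_1^2 \sum_{i=1}^n F^{ii}\). -/

import Mathlib

open Finset

/-- The `k`-th elementary symmetric polynomial of `κ` restricted to indices in `s`. -/
noncomputable def esymmOn {n : ℕ} (s : Finset (Fin n)) (κ : Fin n → ℝ) (k : ℕ) : ℝ :=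
  ∑ S ∈ s.powersetCard k, ∏ i ∈ S, κ i

/-- The `k`-th elementary symmetric polynomial of `κ : Fin n → ℝ`. -/
noncomputable def esymm {n : ℕ} (κ : Fin n → ℝ) (k : ℕ) : ℝ :=
  esymmOn Finset.univ κ k

section GammaConeProof

open Polynomial Filter Topology

namespace GammaCone




/-- product of positives in a multiset is positive -/
lemma multiset_prod_pos {s : Multiset ℝ} (h : ∀ x ∈ s, 0 < x) : 0 < s.prod := by
  induction s using Multiset.induction with
  | empty => simp
  | cons a t ih =>
    rw [Multiset.prod_cons]
    exact mul_pos (h a (Multiset.mem_cons_self a t))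
      (ih fun x hx => h x (Multiset.mem_cons_of_mem hx))

lemma multiset_sum_pos {s : Multiset ℝ} (h : ∀ x ∈ s, 0 < x) (hs : s ≠ 0) : 0 < s.sum := by
  induction s using Multiset.induction with
  | empty => simp at hs
  | cons a t ih =>
    rw [Multiset.sum_cons]
    rcases eq_or_ne t 0 with rfl | ht
    · simpa using h a (Multiset.mem_cons_self a 0)
    · have := ih (fun x hx => h x (Multiset.mem_cons_of_mem hx)) ht
      have ha := h a (Multiset.mem_cons_self a t)
      linarith

lemma esymm_zero' (s : Multiset ℝ) : s.esymm 0 = 1 := by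
  simp [Multiset.esymm]

lemma esymm_pos {s : Multiset ℝ} (h : ∀ x ∈ s, 0 < x) {m : ℕ} (hm : m ≤ Multiset.card s) :
    0 < s.esymm m := by
  rw [Multiset.esymm]
  apply multiset_sum_pos
  · intro x hx
    rw [Multiset.mem_map] at hx
    obtain ⟨t, ht, rfl⟩ := hx
    rw [Multiset.mem_powersetCard] at ht
    exact multiset_prod_pos fun y hy => h y (Multiset.mem_of_le ht.1 hy)
  · intro hc
    have := congrArg Multiset.card hc
    rw [Multiset.card_map, Multiset.card_powersetCard, Multiset.card_zero] at this
    exact (Nat.choose_pos hm).ne' this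

lemma esymm_cons (a : ℝ) (s : Multiset ℝ) (m : ℕ) :
    (a ::ₘ s).esymm (m + 1) = s.esymm (m + 1) + a * s.esymm m := by
  rw [Multiset.esymm, Multiset.powersetCard_cons, Multiset.map_add, Multiset.sum_add,
    Multiset.map_map]
  congr 1
  rw [Multiset.esymm, ← Multiset.sum_map_mul_left]
  congr 1
  apply Multiset.map_congr rfl
  intro t _
  simp [Multiset.prod_cons]




/-- The polynomial `∏ (X + a)` over a multiset. -/
noncomputable def P (M : Multiset ℝ) : ℝ[X] := (M.map fun a => X + C a).prod

lemma monic_P (M : Multiset ℝ) : (P M).Monic :=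
  monic_multiset_prod_of_monic M _ fun a _ => monic_X_add_C a

lemma P_ne_zero (M : Multiset ℝ) : P M ≠ 0 := (monic_P M).ne_zero

lemma natDegree_P (M : Multiset ℝ) : (P M).natDegree = Multiset.card M := by
  rw [P, natDegree_multiset_prod_of_monic]
  · rw [Multiset.map_map]
    simp [Function.comp_def, natDegree_X_add_C]
  · intro f hf
    obtain ⟨a, -, rfl⟩ := Multiset.mem_map.mp hf
    exact monic_X_add_C a

lemma coeff_P (M : Multiset ℝ) {j : ℕ} (h : j ≤ Multiset.card M) :
    (P M).coeff j = M.esymm (Multiset.card M - j) :=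
  Multiset.prod_X_add_C_coeff M h

lemma P_eq_neg_sub (M : Multiset ℝ) :
    P M = ((M.map fun a => -a).map fun a => X - C a).prod := by
  rw [P, Multiset.map_map]
  apply congrArg
  apply Multiset.map_congr rfl
  intro a _
  simp [sub_eq_add_neg]

lemma splits_P (M : Multiset ℝ) : (P M).Splits := by
  rw [splits_iff_card_roots, natDegree_P, P_eq_neg_sub, roots_multiset_prod_X_sub_C]
  simp

lemma P_cons (a : ℝ) (M : Multiset ℝ) : P (a ::ₘ M) = (X + C a) * P M := by
  rw [P, Multiset.map_cons, Multiset.prod_cons, P]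

lemma splits_derivative {f : ℝ[X]} (hf : f.Splits) :
    f.derivative.Splits := by
  rw [splits_iff_card_roots] at hf ⊢
  have h1 := f.card_roots_le_derivative
  have h2 := (derivative f).card_roots'
  have h3 := f.natDegree_derivative_le
  omega

lemma splits_iterate_derivative {f : ℝ[X]} (hf : f.Splits) (m : ℕ) :
    (derivative^[m] f).Splits := by
  induction m with
  | zero => exact hf
  | succ m ih => rw [Function.iterate_succ_apply']; exact splits_derivative ih

/-- Leibniz rule for iterated derivatives of `(X + a) * q`. -/
lemma leibniz (a : ℝ) (q : ℝ[X]) (m : ℕ) :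
    derivative^[m + 1] ((X + C a) * q) =
      (X + C a) * derivative^[m + 1] q + C ((m : ℝ) + 1) * derivative^[m] q := by
  induction m with
  | zero =>
    simp only [Function.iterate_one, Function.iterate_zero, id_eq, derivative_mul]
    simp [derivative_add, derivative_X, derivative_C]
    ring
  | succ m ih =>
    have e1 : derivative^[m + 1] q = derivative (derivative^[m] q) :=
      Function.iterate_succ_apply' _ _ _
    have e2 : derivative^[m + 1 + 1] q = derivative (derivative (derivative^[m] q)) := by
      rw [Function.iterate_succ_apply', e1]
    have e3 : derivative^[m + 1 + 1] ((X + C a) * q)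
        = derivative (derivative^[m + 1] ((X + C a) * q)) :=
      Function.iterate_succ_apply' _ _ _
    rw [e3, ih, e1, e2, derivative_add, derivative_mul, derivative_mul, derivative_C]
    generalize derivative^[m] q = Q
    simp only [derivative_add, derivative_X, derivative_C, zero_add, add_zero, zero_mul]
    push_cast
    simp only [C_add, C_1]
    ring

/-- A polynomial with nonnegative coefficients and positive constant coefficient is
positive at nonnegative arguments. -/
lemma eval_pos_of_coeff (f : ℝ[X]) (h0 : 0 < f.coeff 0) (h : ∀ j, 0 ≤ f.coeff j)
    {x : ℝ} (hx : 0 ≤ x) : 0 < f.eval x := by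
  rw [eval_eq_sum_range]
  have hmem : (0 : ℕ) ∈ Finset.range (f.natDegree + 1) := by simp
  have := Finset.single_le_sum (f := fun j => f.coeff j * x ^ j)
    (fun j _ => mul_nonneg (h j) (pow_nonneg hx j)) hmem
  simp only [pow_zero, mul_one] at this
  linarith

lemma dXsub (a : ℝ) (g : ℝ[X]) :
    derivative ((X - C a) * g) = g + (X - C a) * derivative g := by
  rw [derivative_mul]
  simp

lemma d2Xsub (a : ℝ) (g : ℝ[X]) :
    derivative (derivative ((X - C a) * g))
      = 2 * derivative g + (X - C a) * derivative (derivative g) := by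
  rw [dXsub, derivative_add, dXsub a (derivative g)]
  ring

/-- key inequality for real-rooted polynomials: `f f'' ≤ (f')²` at any point. -/
lemma deriv_sq_ge (c r : ℝ) : ∀ l : List ℝ,
    eval r (C c * (l.map fun a => X - C a).prod) *
      eval r (derivative (derivative (C c * (l.map fun a => X - C a).prod))) ≤
    (eval r (derivative (C c * (l.map fun a => X - C a).prod))) ^ 2 := by
  intro l
  induction l with
  | nil => simp
  | cons a l ih =>
    have hre : C c * ((a :: l).map fun a => X - C a).prod =
        (X - C a) * (C c * (l.map fun a => X - C a).prod) := by
      rw [List.map_cons, List.prod_cons]; ring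
    rw [hre]
    generalize (C c * (l.map fun a => X - C a).prod : ℝ[X]) = g at ih ⊢
    rw [d2Xsub, dXsub]
    simp only [eval_add, eval_mul, eval_sub, eval_X, eval_C, eval_ofNat]
    set u := r - a
    set A := eval r g
    set B := eval r (derivative g)
    set C2 := eval r (derivative (derivative g))
    nlinarith [sq_nonneg A, mul_nonneg (sq_nonneg u) (sub_nonneg.mpr ih)]

/-- strict version when there is at least one root and `r` is not a root. -/
lemma deriv_sq_gt (c r : ℝ) (a : ℝ) (l : List ℝ)
    (hne : eval r (C c * ((a :: l).map fun b => X - C b).prod) ≠ 0) :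
    eval r (C c * ((a :: l).map fun b => X - C b).prod) *
      eval r (derivative (derivative (C c * ((a :: l).map fun b => X - C b).prod))) <
    (eval r (derivative (C c * ((a :: l).map fun b => X - C b).prod))) ^ 2 := by
  have hre : C c * ((a :: l).map fun b => X - C b).prod =
      (X - C a) * (C c * (l.map fun b => X - C b).prod) := by
    rw [List.map_cons, List.prod_cons]; ring
  rw [hre] at hne ⊢
  have hih := deriv_sq_ge c r l
  revert hih hne
  generalize (C c * (l.map fun b => X - C b).prod : ℝ[X]) = g
  intro hne hih
  have hA : eval r g ≠ 0 := by
    intro h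
    exact hne (by simp [eval_mul, h])
  rw [d2Xsub, dXsub]
  simp only [eval_add, eval_mul, eval_sub, eval_X, eval_C, eval_ofNat]
  set u := r - a
  set A := eval r g
  set B := eval r (derivative g)
  set C2 := eval r (derivative (derivative g))
  have hA2 : 0 < A ^ 2 := lt_of_le_of_ne (sq_nonneg A) (Ne.symm (pow_ne_zero 2 hA))
  nlinarith [hA2, mul_nonneg (sq_nonneg u) (sub_nonneg.mpr hih)]


lemma descFactorial_pos' {n k : ℕ} (h : k ≤ n) : 0 < n.descFactorial k :=
  Nat.pos_of_ne_zero fun h0 => absurd (Nat.descFactorial_eq_zero_iff_lt.mp h0) (not_lt.mpr h)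

lemma iterate_deriv_coeff (q : ℝ[X]) (d j : ℕ) :
    (derivative^[d] q).coeff j = (((j + d).descFactorial d : ℕ) : ℝ) * q.coeff (j + d) := by
  rw [Polynomial.coeff_iterate_derivative, nsmul_eq_mul]

lemma eval_iterate_deriv_P_pos (M : Multiset ℝ) (k : ℕ) (hk : k ≤ Multiset.card M)
    (hΓ : ∀ m, 1 ≤ m → m ≤ k → 0 < M.esymm m)
    (d : ℕ) (hd : Multiset.card M - k ≤ d) (hd2 : d ≤ Multiset.card M)
    {x : ℝ} (hx : 0 ≤ x) : 0 < eval x (derivative^[d] (P M)) := by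
  have hes : ∀ j, j ≤ k → 0 < M.esymm j := by
    intro j hj
    rcases Nat.eq_zero_or_pos j with rfl | h
    · rw [esymm_zero']; norm_num
    · exact hΓ j h hj
  apply eval_pos_of_coeff _ _ _ hx
  · rw [iterate_deriv_coeff]
    simp only [Nat.zero_add, zero_add]
    rw [coeff_P M hd2]
    refine mul_pos ?_ (hes _ (by omega))
    exact_mod_cast descFactorial_pos' (le_refl d)
  · intro j
    rw [iterate_deriv_coeff]
    rcases le_or_gt (j + d) (Multiset.card M) with h | h
    · rw [coeff_P M h]
      exact mul_nonneg (by positivity) (le_of_lt (hes _ (by omega)))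
    · rw [coeff_eq_zero_of_natDegree_lt (by rw [natDegree_P]; exact h), mul_zero]

lemma eval_eq_prod_roots {g : ℝ[X]} (hs : g.Splits) (x : ℝ) :
    eval x g = g.leadingCoeff * (g.roots.map fun b => x - b).prod := by
  conv_lhs => rw [hs.eq_prod_roots]
  rw [eval_mul, eval_C, eval_multiset_prod, Multiset.map_map]
  simp [Function.comp_def]

lemma coeff_pos_of_roots_neg {g : ℝ[X]} (hs : g.Splits)
    (hl : 0 < g.leadingCoeff) (hroots : ∀ b ∈ g.roots, b < 0) {j : ℕ}
    (hj : j ≤ g.natDegree) : 0 < g.coeff j := by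
  have heq2 : g = C g.leadingCoeff * P (g.roots.map fun b => -b) := by
    conv_lhs => rw [hs.eq_prod_roots]
    rw [P_eq_neg_sub, Multiset.map_map]
    congr 1
    rw [Multiset.map_map]
    congr 1
    apply Multiset.map_congr rfl
    intro b _
    simp
  have hcard : Multiset.card (g.roots.map fun b => -b) = g.natDegree := by
    rw [Multiset.card_map, splits_iff_card_roots.mp hs]
  rw [show g.coeff j = (C g.leadingCoeff * P (g.roots.map fun b => -b)).coeff j from by rw [← heq2]]
  rw [coeff_C_mul, coeff_P _ (by rw [hcard]; exact hj)]
  refine mul_pos hl (esymm_pos ?_ (by rw [hcard]; omega))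
  intro y hy
  rw [Multiset.mem_map] at hy
  obtain ⟨b, hb, rfl⟩ := hy
  linarith [hroots b hb]

lemma deriv_nonneg_at_max_root {g : ℝ[X]} {r : ℝ} (h0 : eval r g = 0)
    (hpos : ∀ x, r < x → 0 < eval x g) : 0 ≤ eval r (derivative g) := by
  have hd : HasDerivAt (fun x => eval x g) (eval r (derivative g)) r := g.hasDerivAt r
  have hslope := hasDerivAt_iff_tendsto_slope.mp hd
  have h2 : Tendsto (slope (fun x => eval x g) r) (𝓝[>] r) (𝓝 (eval r (derivative g))) :=
    hslope.mono_left (nhdsWithin_mono r (fun x hx => Set.mem_compl_singleton_iff.mpr (LT.lt.ne' (Set.mem_Ioi.mp hx))))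
  apply ge_of_tendsto h2
  filter_upwards [self_mem_nhdsWithin] with x hx
  rw [slope_def_field, h0, sub_zero]
  exact div_nonneg (le_of_lt (hpos x hx)) (by linarith [hx.out])

/-- The fundamental lemma: if `a ::ₘ T ∈ Γ_k` then `T ∈ Γ_{k-1}`. -/
lemma cone_shrink (a : ℝ) (T : Multiset ℝ) (k : ℕ) (hk : k ≤ Multiset.card T + 1)
    (hΓ : ∀ m, 1 ≤ m → m ≤ k → 0 < (a ::ₘ T).esymm m) :
    ∀ m, 1 ≤ m → m ≤ k - 1 → 0 < T.esymm m := by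
  intro m hm1 hm2
  have hk2 : 2 ≤ k := by omega
  set n := Multiset.card T + 1 with hn
  have hcM : Multiset.card (a ::ₘ T) = n := by rw [Multiset.card_cons]
  set q := P T with hq
  have hqdeg : q.natDegree = n - 1 := by rw [hq, natDegree_P]; omega
  set p := P (a ::ₘ T) with hp
  have hpq : p = (X + C a) * q := P_cons a T
  set g := derivative^[n - k] q with hg
  have hgsplits : g.Splits := splits_iterate_derivative (splits_P T) _
  have hgtoppos : 0 < g.coeff (k - 1) := by
    rw [hg, iterate_deriv_coeff]
    have h1 : k - 1 + (n - k) = n - 1 := by omega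
    rw [h1]
    have h2 : q.coeff (n - 1) = 1 := by
      have := (monic_P T).coeff_natDegree
      rwa [← hq, hqdeg] at this
    rw [h2, mul_one]
    exact_mod_cast descFactorial_pos' (by omega)
  have hgdeg : g.natDegree = k - 1 := by
    apply le_antisymm
    · have h2 := natDegree_iterate_derivative q (n - k)
      rw [hqdeg] at h2
      rw [hg]
      omega
    · exact le_natDegree_of_ne_zero (ne_of_gt hgtoppos)
  have hglead : 0 < g.leadingCoeff := by
    rw [Polynomial.leadingCoeff, hgdeg]; exact hgtoppos
  have hg0 : g ≠ 0 := fun h => by rw [h, leadingCoeff_zero] at hglead; exact lt_irrefl _ hglead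
  -- the key positivity of g on [0, ∞)
  have hgpos : ∀ x : ℝ, 0 ≤ x → 0 < eval x g := by
    by_contra hcon
    push_neg at hcon
    obtain ⟨x₀, hx₀, hx₀'⟩ := hcon
    have hrootcard : Multiset.card g.roots = k - 1 := by
      rw [splits_iff_card_roots.mp hgsplits, hgdeg]
    have hroots_ne : g.roots.toFinset.Nonempty := by
      rw [Multiset.toFinset_nonempty]
      intro h
      rw [h] at hrootcard
      simp at hrootcard
      omega
    set r := g.roots.toFinset.max' hroots_ne with hr
    have hrmem : r ∈ g.roots := Multiset.mem_toFinset.mp (g.roots.toFinset.max'_mem hroots_ne)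
    have hrmax : ∀ b ∈ g.roots, b ≤ r := fun b hb =>
      g.roots.toFinset.le_max' b (Multiset.mem_toFinset.mpr hb)
    have hgr : eval r g = 0 := (mem_roots hg0).mp hrmem
    have hrx₀ : x₀ ≤ r := by
      by_contra hcon2
      push_neg at hcon2
      have : 0 < eval x₀ g := by
        rw [eval_eq_prod_roots hgsplits]
        refine mul_pos hglead (multiset_prod_pos ?_)
        intro y hy
        rw [Multiset.mem_map] at hy
        obtain ⟨b, hb, rfl⟩ := hy
        have := hrmax b hb
        linarith
      linarith
    have hr0 : 0 ≤ r := le_trans hx₀ hrx₀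
    have hgtpos : ∀ x, r < x → 0 < eval x g := by
      intro x hxr
      rw [eval_eq_prod_roots hgsplits]
      refine mul_pos hglead (multiset_prod_pos ?_)
      intro y hy
      rw [Multiset.mem_map] at hy
      obtain ⟨b, hb, rfl⟩ := hy
      have := hrmax b hb
      linarith
    have hg'r : 0 ≤ eval r (derivative g) := deriv_nonneg_at_max_root hgr hgtpos
    -- now split on n = k or n > k
    rcases Nat.lt_or_ge k n with hkn | hkn
    · -- n > k
      set s := n - k - 1 with hs
      have hs1 : n - k = s + 1 := by omega
      set f := derivative^[s] q with hf
      have hgf : g = derivative f := by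
        rw [hg, hs1, Function.iterate_succ_apply']
      have hfr_pos : 0 < eval r f := by
        have hlb := leibniz a q s
        have hppos : 0 < eval r (derivative^[s + 1] p) := by
          apply eval_iterate_deriv_P_pos (a ::ₘ T) k (by omega)
            (by intro j h1 h2; exact hΓ j h1 h2) (s + 1) (by omega) (by omega) hr0
        rw [hpq, hlb] at hppos
        simp only [eval_add, eval_mul, eval_C, eval_X] at hppos
        rw [← hs1] at hppos
        rw [show derivative^[n-k] q = g from rfl, hgr, mul_zero, zero_add] at hppos
        rw [hf]
        by_contra hE
        push_neg at hE
        have hc : (0:ℝ) ≤ (s:ℝ) + 1 := by positivity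
        nlinarith [hppos]
      have hf''_pos : 0 < eval r (derivative g) := by
        rcases lt_or_eq_of_le hg'r with h | h
        · exact h
        · exfalso
          have hlb := leibniz a q (s + 1)
          have hppos : 0 < eval r (derivative^[s + 1 + 1] p) := by
            apply eval_iterate_deriv_P_pos (a ::ₘ T) k (by omega)
              (by intro j h1 h2; exact hΓ j h1 h2) (s + 1 + 1) (by omega) (by omega) hr0
          rw [hpq, hlb] at hppos
          simp only [eval_add, eval_mul, eval_C, eval_X] at hppos
          rw [← hs1] at hppos
          rw [show derivative^[n-k] q = g from rfl] at hppos
          have hdg : derivative^[(n - k) + 1] q = derivative g := by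
            rw [Function.iterate_succ_apply', hg]
          rw [hdg, hgr, ← h] at hppos
          simp at hppos
      -- f has positive value, zero derivative, positive second derivative at r: contradiction
      have hfsplits : f.Splits := splits_iterate_derivative (splits_P T) _
      have hf0 : f ≠ 0 := by
        intro h
        rw [h] at hfr_pos
        simp at hfr_pos
      have hftoppos : 0 < f.coeff k := by
        rw [hf, iterate_deriv_coeff]
        have h1 : k + s = n - 1 := by omega
        rw [h1]
        have h2 : q.coeff (n - 1) = 1 := by
          have := (monic_P T).coeff_natDegree
          rwa [← hq, hqdeg] at this
        rw [h2, mul_one]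
        exact_mod_cast descFactorial_pos' (by omega)
      have hfdeg : f.natDegree = k := by
        apply le_antisymm
        · have h2 := natDegree_iterate_derivative q s
          rw [hqdeg] at h2
          rw [hf]
          omega
        · exact le_natDegree_of_ne_zero (ne_of_gt hftoppos)
      have hfrootcard : Multiset.card f.roots = k := by
        rw [splits_iff_card_roots.mp hfsplits, hfdeg]
      obtain ⟨l, hl⟩ : ∃ l : List ℝ, (l : Multiset ℝ) = f.roots :=
        ⟨f.roots.toList, Multiset.coe_toList _⟩
      have hlne : l ≠ [] := by
        intro h
        rw [h] at hl
        rw [← hl] at hfrootcard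
        simp at hfrootcard
        omega
      obtain ⟨b, l', rfl⟩ : ∃ b l'', l = b :: l'' := by
        cases l with
        | nil => exact absurd rfl hlne
        | cons b l'' => exact ⟨b, l'', rfl⟩
      have hfeq : f = C f.leadingCoeff * (((b :: l').map fun c => X - C c).prod) := by
        conv_lhs => rw [hfsplits.eq_prod_roots]
        rw [← hl, Multiset.map_coe, Multiset.prod_coe]
      have hkey := deriv_sq_gt f.leadingCoeff r b l' (by rw [← hfeq]; exact ne_of_gt hfr_pos)
      rw [← hfeq] at hkey
      rw [← hgf, hgr] at hkey
      norm_num at hkey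
      nlinarith [mul_pos hfr_pos hf''_pos]
    · -- n = k
      have hnk : n = k := by omega
      have hg_q : g = q := by rw [hg, hnk, Nat.sub_self, Function.iterate_zero_apply]
      have hppos : 0 < eval r p := by
        have := eval_iterate_deriv_P_pos (a ::ₘ T) k (by omega)
          (by intro j h1 h2; exact hΓ j h1 h2) 0 (by omega) (by omega) hr0
        rwa [Function.iterate_zero_apply] at this
      rw [hpq] at hppos
      simp only [eval_mul, eval_add, eval_X, eval_C] at hppos
      rw [← hg_q, hgr, mul_zero] at hppos
      exact lt_irrefl _ hppos
  -- conclude: all roots of g are negative, so coefficients positive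
  have hroots_neg : ∀ b ∈ g.roots, b < 0 := by
    intro b hb
    by_contra hcon
    push_neg at hcon
    have h1 := hgpos b hcon
    have h2 : eval b g = 0 := (mem_roots hg0).mp hb
    rw [h2] at h1
    exact lt_irrefl _ h1
  have hcoeffpos : 0 < g.coeff (k - 1 - m) :=
    coeff_pos_of_roots_neg hgsplits hglead hroots_neg (by omega)
  rw [hg, iterate_deriv_coeff] at hcoeffpos
  have hidx : k - 1 - m + (n - k) = n - 1 - m := by omega
  rw [hidx] at hcoeffpos
  have hcq : q.coeff (n - 1 - m) = T.esymm m := by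
    rw [hq, coeff_P T (by omega)]
    congr 1
    omega
  rw [hcq] at hcoeffpos
  rcases mul_pos_iff.mp hcoeffpos with ⟨-, h⟩ | ⟨h, -⟩
  · exact h
  · exact absurd h (not_lt.mpr (by positivity))

lemma esymmOn_eq {n : ℕ} (s : Finset (Fin n)) (κ : Fin n → ℝ) (m : ℕ) :
    esymmOn s κ m = (s.val.map κ).esymm m :=
  (Finset.esymm_map_val κ s m).symm

lemma cons_erase_map {n : ℕ} (s : Finset (Fin n)) (κ : Fin n → ℝ) {i : Fin n} (hi : i ∈ s) :
    s.val.map κ = κ i ::ₘ ((s.erase i).val.map κ) := by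
  rw [Finset.erase_val]
  conv_lhs => rw [← Multiset.cons_erase (Finset.mem_val.mpr hi)]
  rw [Multiset.map_cons]

section FinalGeneral

variable {n k : ℕ} {θ : ℝ} {κ : Fin n → ℝ} {t z : Fin n}

lemma card_erase {n : ℕ} (i : Fin n) :
    ((Finset.univ.erase i : Finset (Fin n))).card = n - 1 := by
  rw [Finset.card_erase_of_mem (Finset.mem_univ i), Finset.card_univ, Fintype.card_fin]

lemma key1 (hkn : k ≤ n)
    (hΓ : ∀ m : ℕ, 1 ≤ m → m ≤ k → 0 < esymm κ m) (i : Fin n) :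
    0 < esymmOn (Finset.univ.erase i) κ (k - 1) := by
  rw [esymmOn_eq]
  rcases Nat.lt_or_ge k 2 with hk2 | hk2
  · rw [show k - 1 = 0 by omega, esymm_zero']
    norm_num
  · have hcard : Multiset.card ((Finset.univ.erase i).val.map κ) = n - 1 := by
      rw [Multiset.card_map, ← Finset.card_def, card_erase]
    apply cone_shrink (κ i) _ k (by omega) _ (k - 1) (by omega) (le_refl _)
    intro m hm1 hm2
    rw [← cons_erase_map Finset.univ κ (Finset.mem_univ i)]
    rw [← esymmOn_eq]
    exact hΓ m hm1 hm2

lemma key2 (hkn : k ≤ n)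
    (hΓ : ∀ m : ℕ, 1 ≤ m → m ≤ k → 0 < esymm κ m) (ht : ∀ i, κ t ≤ κ i) (i : Fin n) :
    esymmOn (Finset.univ.erase i) κ (k - 1) ≤ esymmOn (Finset.univ.erase t) κ (k - 1) := by
  rcases eq_or_ne i t with rfl | hit
  · exact le_refl _
  rcases Nat.lt_or_ge k 2 with hk2 | hk2
  · rw [esymmOn_eq, esymmOn_eq, show k - 1 = 0 by omega, esymm_zero', esymm_zero']
  have hn2 : 2 ≤ n := by
    by_contra hcon
    push_neg at hcon
    interval_cases n
    · exact absurd i.isLt (by omega)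
    · exact hit (Subsingleton.elim i t)
  have hti : t ∈ Finset.univ.erase i :=
    Finset.mem_erase.mpr ⟨Ne.symm hit, Finset.mem_univ t⟩
  have hit' : i ∈ Finset.univ.erase t :=
    Finset.mem_erase.mpr ⟨hit, Finset.mem_univ i⟩
  set A : Multiset ℝ := (((Finset.univ.erase i).erase t).val.map κ) with hA
  have h1 : (Finset.univ.erase i).val.map κ = κ t ::ₘ A :=
    cons_erase_map _ κ hti
  have h2 : (Finset.univ.erase t).val.map κ = κ i ::ₘ A := by
    rw [hA, Finset.erase_right_comm]
    exact cons_erase_map _ κ hit'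
  have hcardA : Multiset.card A = n - 2 := by
    rw [hA, Multiset.card_map, ← Finset.card_def,
      Finset.card_erase_of_mem hti, card_erase]
    omega
  have hAnn : 0 ≤ A.esymm (k - 2) := by
    rcases Nat.lt_or_ge k 3 with hk3 | hk3
    · rw [show k - 2 = 0 by omega, esymm_zero']
      norm_num
    · have hcone1 : ∀ m, 1 ≤ m → m ≤ k - 1 → 0 < ((Finset.univ.erase i).val.map κ).esymm m := by
        apply cone_shrink (κ i) _ k
          (by rw [Multiset.card_map, ← Finset.card_def, card_erase]; omega)
        intro m hm1 hm2
        rw [← cons_erase_map Finset.univ κ (Finset.mem_univ i), ← esymmOn_eq]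
        exact hΓ m hm1 hm2
      have hcone2 : ∀ m, 1 ≤ m → m ≤ k - 1 - 1 → 0 < A.esymm m := by
        apply cone_shrink (κ t) A (k - 1) (by omega)
        intro m hm1 hm2
        rw [← h1]
        exact hcone1 m hm1 hm2
      exact le_of_lt (hcone2 (k - 2) (by omega) (by omega))
  have hee : k - 1 = (k - 2) + 1 := by omega
  rw [esymmOn_eq, esymmOn_eq, h1, h2, hee, esymm_cons, esymm_cons]
  have := ht i
  nlinarith [hAnn, this]

end FinalGeneral

lemma final_general (n k : ℕ) (hk : 1 ≤ k) (hkn : k ≤ n) (θ : ℝ) (hθ0 : 0 < θ)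
    (κ : Fin n → ℝ) (t z : Fin n) (hmin : ∀ i, κ t ≤ κ i)
    (hΓ : ∀ m : ℕ, 1 ≤ m → m ≤ k → 0 < esymm κ m)
    (hκ1 : 0 < κ z) (hκn : κ t ≤ -θ * κ z) :
    (∑ i, esymmOn (Finset.univ.erase i) κ (k - 1) * κ i ^ 2 ≥
        esymmOn (Finset.univ.erase t) κ (k - 1) * κ t ^ 2) ∧
      esymmOn (Finset.univ.erase t) κ (k - 1) * κ t ^ 2 ≥
        θ ^ 2 / n * κ z ^ 2 * ∑ i, esymmOn (Finset.univ.erase i) κ (k - 1) := by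
  have hFpos := key1 hkn hΓ
  have hFmono := key2 hkn hΓ hmin
  have hn0 : 0 < n := t.pos
  have hnR : (0 : ℝ) < n := by exact_mod_cast hn0
  constructor
  · exact Finset.single_le_sum
      (fun i _ => mul_nonneg (le_of_lt (hFpos i)) (sq_nonneg _)) (Finset.mem_univ t)
  · have hsum : ∑ i, esymmOn (Finset.univ.erase i) κ (k - 1) ≤
        n * esymmOn (Finset.univ.erase t) κ (k - 1) := by
      calc ∑ i, esymmOn (Finset.univ.erase i) κ (k - 1)
          ≤ ∑ _i : Fin n, esymmOn (Finset.univ.erase t) κ (k - 1) :=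
            Finset.sum_le_sum (fun i _ => hFmono i)
        _ = n * esymmOn (Finset.univ.erase t) κ (k - 1) := by
            rw [Finset.sum_const, Finset.card_univ, Fintype.card_fin, nsmul_eq_mul]
    have hκt2 : θ ^ 2 * κ z ^ 2 ≤ κ t ^ 2 := by
      have h1 : θ * κ z ≤ -κ t := by linarith
      have h2 : 0 < θ * κ z := mul_pos hθ0 hκ1
      nlinarith
    have hsnn : 0 ≤ ∑ i, esymmOn (Finset.univ.erase i) κ (k - 1) :=
      Finset.sum_nonneg fun i _ => le_of_lt (hFpos i)
    calc θ ^ 2 / n * κ z ^ 2 * ∑ i, esymmOn (Finset.univ.erase i) κ (k - 1)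
        ≤ θ ^ 2 / n * κ z ^ 2 * (n * esymmOn (Finset.univ.erase t) κ (k - 1)) := by
          apply mul_le_mul_of_nonneg_left hsum (by positivity)
      _ = θ ^ 2 * κ z ^ 2 * esymmOn (Finset.univ.erase t) κ (k - 1) := by
          field_simp
      _ ≤ κ t ^ 2 * esymmOn (Finset.univ.erase t) κ (k - 1) :=
          mul_le_mul_of_nonneg_right hκt2 (le_of_lt (hFpos t))
      _ = esymmOn (Finset.univ.erase t) κ (k - 1) * κ t ^ 2 := by ring

end GammaCone

end GammaConeProof

/-- If `κ ∈ Γ_k` is decreasingly ordered with `κ₁ > 0` and `κ_n ≤ -θ κ₁` for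
some `θ ∈ (0,1]`, then with `F^{ii} = σ_{k-1}(κ|i)`,
`∑ F^{ii} κ_i² ≥ F^{nn} κ_n² ≥ (θ²/n) κ₁² ∑ F^{ii}`. -/
theorem lower_bound_Fii_kappa_sq (n k : ℕ) (hk : 1 ≤ k) (hkn : k ≤ n)
    (hn : 1 ≤ n) (θ : ℝ) (hθ0 : 0 < θ) (hθ1 : θ ≤ 1)
    (κ : Fin n → ℝ) (hord : ∀ i j : Fin n, i ≤ j → κ j ≤ κ i)
    (hΓ : ∀ m : ℕ, 1 ≤ m → m ≤ k → 0 < esymm κ m)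
    (hκ1 : 0 < κ ⟨0, by omega⟩)
    (hκn : κ ⟨n - 1, by omega⟩ ≤ -θ * κ ⟨0, by omega⟩) :
    (∑ i, esymmOn (Finset.univ.erase i) κ (k - 1) * κ i ^ 2 ≥
        esymmOn (Finset.univ.erase ⟨n - 1, by omega⟩) κ (k - 1) *
          κ ⟨n - 1, by omega⟩ ^ 2) ∧
      esymmOn (Finset.univ.erase ⟨n - 1, by omega⟩) κ (k - 1) *
          κ ⟨n - 1, by omega⟩ ^ 2 ≥
        θ ^ 2 / n * κ ⟨0, by omega⟩ ^ 2 *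
          ∑ i, esymmOn (Finset.univ.erase i) κ (k - 1) := by
  exact GammaCone.final_general n k hk hkn θ hθ0 κ ⟨n - 1, by omega⟩ ⟨0, by omega⟩
    (fun i => hord i ⟨n - 1, by omega⟩ (by
      rw [Fin.le_def]
      exact Nat.le_sub_one_of_lt i.isLt))
    hΓ hκ1 hκn
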